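/- With notation as above (|X| = ks, V with basis e₁,...,e_{ks-1}, e₀ = Σᵢeᵢ, p_a = span(Σ_{j∈a}e_j) for 0∉a and p_a = p_{X∖a}), if B = {a₁,...,a_s} is a partition of X into k-element sets and a is a k-element subset of X not belonging to B, then the point p_a does not lie in the span of {p_{a₁},...,p_{a_s}}. -/

import Mathlib

/-- The representing vector of the projective point `p_c`: for a subset `c` of
`X = {0,…,n-1}` it is `Σ_{j∈c} e j` when `0 ∉ c`, and (using `p_c = p_{X∖c}`)
`Σ_{j∈cᶜ} e j` when `0 ∈ c`. -/
def pVec {V : Type*} [AddCommMonoid V] {n : ℕ} [NeZero n]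
    (e : Fin n → V) (c : Finset (Fin n)) : V :=
  if (0 : Fin n) ∈ c then ∑ j ∈ cᶜ, e j else ∑ j ∈ c, e j

/-- The "support" of the point `p_c`: the set actually summed over in `pVec`. -/
def pSet {n : ℕ} [NeZero n] (c : Finset (Fin n)) : Finset (Fin n) :=
  if (0 : Fin n) ∈ c then cᶜ else c

lemma pVec_eq_sum_pSet {V : Type*} [AddCommMonoid V] {n : ℕ} [NeZero n]
    (e : Fin n → V) (c : Finset (Fin n)) : pVec e c = ∑ j ∈ pSet c, e j := by
  unfold pVec pSet; split <;> rfl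

lemma pSet_subset {n : ℕ} [NeZero n] (c : Finset (Fin n)) :
    pSet c ⊆ Finset.univ.erase (0 : Fin n) := by
  intro j hj
  unfold pSet at hj
  split at hj <;> rename_i h
  · simp only [Finset.mem_compl] at hj
    exact Finset.mem_erase.2 ⟨fun hj0 => hj (hj0 ▸ h), Finset.mem_univ _⟩
  · exact Finset.mem_erase.2 ⟨fun hj0 => h (hj0 ▸ hj), Finset.mem_univ _⟩

lemma sum_indicator_smul {F V : Type*} [Field F] [AddCommGroup V] [Module F V]
    {n : ℕ} [NeZero n] (e : Fin n → V) {d : Finset (Fin n)}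
    (hd : d ⊆ Finset.univ.erase (0 : Fin n)) :
    ∑ j ∈ d, e j
      = ∑ j ∈ Finset.univ.erase (0 : Fin n), (if j ∈ d then (1 : F) else 0) • e j := by
  have : ∑ j ∈ Finset.univ.erase (0 : Fin n), (if j ∈ d then (1 : F) else 0) • e j
      = ∑ j ∈ Finset.univ.erase (0 : Fin n), (if j ∈ d then e j else 0) := by
    refine Finset.sum_congr rfl fun j _ => ?_
    split <;> simp
  rw [this, Finset.sum_ite_mem, Finset.inter_eq_right.2 hd]

theorem point_not_in_block_span {F V : Type*} [Field F] [AddCommGroup V] [Module F V]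
    (k s n : ℕ) (hk : 0 < k) (hs : 2 ≤ s) (hn : n = k * s) [NeZero n]
    (e : Fin n → V)
    (hli : LinearIndependent F (fun i : {i : Fin n // i ≠ 0} => e i.1))
    (h0 : e 0 = ∑ i ∈ Finset.univ.erase (0 : Fin n), e i)
    (a : Fin s → Finset (Fin n))
    (hcard : ∀ i, (a i).card = k)
    (hdisj : ∀ i j, i ≠ j → Disjoint (a i) (a j))
    (hcover : Finset.univ.biUnion a = Finset.univ)
    (c : Finset (Fin n)) (hc : c.card = k) (hnot : ∀ i, c ≠ a i) :
    pVec e c ∉ Submodule.span F (Set.range fun i : Fin s => pVec e (a i)) := by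
  set E := Finset.univ.erase (0 : Fin n) with hE
  intro hmem
  rw [Submodule.mem_span_range_iff_exists_fun] at hmem
  obtain ⟨lam, hlam⟩ := hmem
  -- every element is in some block, and the block is unique
  have hblock : ∀ j : Fin n, ∃ i, j ∈ a i := by
    intro j
    have hj := hcover.symm ▸ Finset.mem_univ j
    exact Finset.mem_biUnion.1 hj |>.imp fun i h => h.2
  obtain ⟨i0, hi0⟩ := hblock 0
  have hblock_unique : ∀ {j : Fin n} {i i' : Fin s}, j ∈ a i → j ∈ a i' → i = i' := by
    intro j i i' h h'
    by_contra hne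
    exact Finset.disjoint_left.1 (hdisj i i' hne) h h'
  have h0ai : ∀ i, (0 : Fin n) ∈ a i ↔ i = i0 :=
    fun i => ⟨fun h => hblock_unique h hi0, fun h => h ▸ hi0⟩
  have hpSet_i0 : pSet (a i0) = (a i0)ᶜ := by unfold pSet; rw [if_pos hi0]
  have hpSet_ne : ∀ i, i ≠ i0 → pSet (a i) = a i := by
    intro i hi
    unfold pSet
    rw [if_neg (fun h => hi ((h0ai i).1 h))]
  -- the key coefficient identity
  have key : ∀ j ∈ E,
      (∑ i, lam i * (if j ∈ pSet (a i) then (1 : F) else 0))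
        = (if j ∈ pSet c then (1 : F) else 0) := by
    have h1 : ∑ i, lam i • pVec e (a i)
        = ∑ j ∈ E, (∑ i, lam i * (if j ∈ pSet (a i) then (1 : F) else 0)) • e j := by
      calc ∑ i, lam i • pVec e (a i)
          = ∑ i, ∑ j ∈ E, (lam i * (if j ∈ pSet (a i) then (1 : F) else 0)) • e j := by
            refine Finset.sum_congr rfl fun i _ => ?_
            rw [pVec_eq_sum_pSet, sum_indicator_smul (F := F) e (pSet_subset _),
              Finset.smul_sum]
            exact Finset.sum_congr rfl fun j _ => smul_smul _ _ _
        _ = ∑ j ∈ E, ∑ i, (lam i * (if j ∈ pSet (a i) then (1 : F) else 0)) • e j :=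
            Finset.sum_comm
        _ = ∑ j ∈ E, (∑ i, lam i * (if j ∈ pSet (a i) then (1 : F) else 0)) • e j := by
            exact Finset.sum_congr rfl fun j _ => (Finset.sum_smul).symm
    have h2 : pVec e c = ∑ j ∈ E, (if j ∈ pSet c then (1 : F) else 0) • e j := by
      rw [pVec_eq_sum_pSet, sum_indicator_smul (F := F) e (pSet_subset _)]
    have hsum : ∑ j ∈ E,
        ((∑ i, lam i * (if j ∈ pSet (a i) then (1 : F) else 0))
          - (if j ∈ pSet c then (1 : F) else 0)) • e j = 0 := by
      have := hlam
      rw [h1, h2] at this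
      simp only [sub_smul, Finset.sum_sub_distrib]
      rw [this, sub_self]
    have hsub : ∑ t : {i : Fin n // i ≠ 0},
        ((∑ i, lam i * (if (t : Fin n) ∈ pSet (a i) then (1 : F) else 0))
          - (if (t : Fin n) ∈ pSet c then (1 : F) else 0)) • e (t : Fin n) = 0 := by
      have heq : ∑ j ∈ E, ((∑ i, lam i * (if j ∈ pSet (a i) then (1 : F) else 0))
            - (if j ∈ pSet c then (1 : F) else 0)) • e j
          = ∑ t : {i : Fin n // i ≠ 0},
              ((∑ i, lam i * (if (t : Fin n) ∈ pSet (a i) then (1 : F) else 0))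
                - (if (t : Fin n) ∈ pSet c then (1 : F) else 0)) • e (t : Fin n) :=
        Finset.sum_subtype E (fun x => by simp [hE, Finset.mem_erase]) _
      exact heq ▸ hsum
    intro j hj
    have hjne : j ≠ 0 := (Finset.mem_erase.1 hj).1
    have := Fintype.linearIndependent_iff.1 hli
      (fun t => (∑ i, lam i * (if (t : Fin n) ∈ pSet (a i) then (1 : F) else 0))
          - (if (t : Fin n) ∈ pSet c then (1 : F) else 0)) hsub ⟨j, hjne⟩
    exact sub_eq_zero.1 this
  -- evaluate the left-hand side of `key`
  have heval : ∀ j : Fin n, ∀ b : Fin s, j ∈ a b → j ≠ 0 →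
      (∑ i, lam i * (if j ∈ pSet (a i) then (1 : F) else 0))
        = if b = i0 then 0 else lam b + lam i0 := by
    intro j b hjb hjne
    by_cases hb : b = i0
    · rw [if_pos hb]
      refine Finset.sum_eq_zero fun i _ => ?_
      by_cases hi : i = i0
      · subst hi
        rw [hpSet_i0, if_neg (by simpa using hb ▸ hjb), mul_zero]
      · rw [hpSet_ne i hi, if_neg, mul_zero]
        intro hji
        exact hi (hblock_unique hji hjb ▸ hb)
    · rw [if_neg hb]
      have hsub : ∑ i, lam i * (if j ∈ pSet (a i) then (1 : F) else 0)
          = ∑ i ∈ {i0, b}, lam i * (if j ∈ pSet (a i) then (1 : F) else 0) := by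
        refine (Finset.sum_subset (Finset.subset_univ _) fun i _ hi => ?_).symm
        simp only [Finset.mem_insert, Finset.mem_singleton, not_or] at hi
        rw [hpSet_ne i hi.1, if_neg (fun hji => hi.2 (hblock_unique hji hjb)), mul_zero]
      rw [hsub, Finset.sum_pair (Ne.symm hb)]
      rw [hpSet_i0, hpSet_ne b hb]
      have hjnoti0 : j ∉ a i0 := fun h => hb (hblock_unique hjb h)
      rw [if_pos (Finset.mem_compl.2 hjnoti0), if_pos hjb, mul_one, mul_one, add_comm]
  -- final combinatorial case analysis
  by_cases h0c : (0 : Fin n) ∈ c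
  · -- then `a i0 ⊆ c`, hence `c = a i0`
    have hpc : pSet c = cᶜ := by unfold pSet; rw [if_pos h0c]
    have hsubset : a i0 ⊆ c := by
      intro j hj
      by_cases hjz : j = 0
      · exact hjz ▸ h0c
      · have hjE : j ∈ E := Finset.mem_erase.2 ⟨hjz, Finset.mem_univ _⟩
        have := key j hjE
        rw [heval j i0 hj hjz, if_pos rfl, hpc] at this
        by_contra hjc
        rw [if_pos (Finset.mem_compl.2 hjc)] at this
        exact one_ne_zero this.symm
    have : a i0 = c :=
      Finset.eq_of_subset_of_card_le hsubset (by rw [hc, hcard])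
    exact hnot i0 this.symm
  · have hpc : pSet c = c := by unfold pSet; rw [if_neg h0c]
    -- `c` avoids the block of `0`
    have hci0 : ∀ j ∈ c, j ∉ a i0 := by
      intro j hjc hji0
      have hjz : j ≠ 0 := fun h => h0c (h ▸ hjc)
      have hjE : j ∈ E := Finset.mem_erase.2 ⟨hjz, Finset.mem_univ _⟩
      have := key j hjE
      rw [heval j i0 hji0 hjz, if_pos rfl, hpc, if_pos hjc] at this
      exact one_ne_zero this.symm
    -- pick an element of `c`, and its block `b`
    obtain ⟨j0, hj0c⟩ := Finset.card_pos.1 (hc ▸ hk)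
    obtain ⟨b, hj0b⟩ := hblock j0
    have hbne : b ≠ i0 := fun h => hci0 j0 hj0c (h ▸ hj0b)
    have hj0z : j0 ≠ 0 := fun h => h0c (h ▸ hj0c)
    have hval0 := key j0 (Finset.mem_erase.2 ⟨hj0z, Finset.mem_univ _⟩)
    rw [heval j0 b hj0b hj0z, if_neg hbne, hpc, if_pos hj0c] at hval0
    have hsubset : a b ⊆ c := by
      intro j' hj'
      have hj'z : j' ≠ 0 := by
        intro h
        exact hbne (hblock_unique (h ▸ hj') hi0)
      have hval := key j' (Finset.mem_erase.2 ⟨hj'z, Finset.mem_univ _⟩)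
      rw [heval j' b hj' hj'z, if_neg hbne, hpc, hval0] at hval
      by_contra hj'c
      rw [if_neg hj'c] at hval
      exact one_ne_zero hval
    have : a b = c :=
      Finset.eq_of_subset_of_card_le hsubset (by rw [hc, hcard])
    exact hnot b this.symm
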